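/- Every multigraph G can be edge-decomposed into k spanning subgraphs G_1, …, G_k such that | |E(G_i)| − |E(G)|/k | < 1 for each i, and for each vertex v and each i, ⌊d_G(v)/(2k)⌋ + ⌊(d_G(v)+1)/(2k)⌋ ≤ d_{G_i}(v) ≤ ⌈d_G(v)/(2k)⌉ + ⌈(d_G(v)−1)/(2k)⌉. -/

import Mathlib

open Finset

variable {V E : Type*}

/-- Degree of `v` in the sub-multigraph given by the edge set `S`,
where `ends e` gives the two endpoints of edge `e` (loops count twice). -/
def mdeg [DecidableEq V] (ends : E → V × V) (S : Finset E) (v : V) : ℕ :=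
  (S.filter fun e => (ends e).1 = v).card + (S.filter fun e => (ends e).2 = v).card

/-- Number of edges with exactly one end in the vertex set `X`. -/
def cutCard [Fintype E] [DecidableEq V] (ends : E → V × V) (X : Finset V) : ℕ :=
  (univ.filter fun e : E =>
    ((ends e).1 ∈ X ∧ (ends e).2 ∉ X) ∨ ((ends e).1 ∉ X ∧ (ends e).2 ∈ X)).card

/-- `lam`-edge-connectedness: every edge cut has at least `lam` edges. -/
def EdgeConn [Fintype V] [Fintype E] [DecidableEq V] (ends : E → V × V) (lam : ℕ) : Prop :=
  ∀ X : Finset V, X.Nonempty → X ≠ univ → lam ≤ cutCard ends X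

section Aux
set_option linter.unusedSectionVars false
set_option linter.unnecessarySeqFocus false

variable {W F : Type*} [DecidableEq W] [DecidableEq F]

/-- weight of edge `e` at vertex `w` (2 for loops at `w`). -/
def awt (g : F → W × W) (w : W) (e : F) : ℕ :=
  (if (g e).1 = w then 1 else 0) + (if (g e).2 = w then 1 else 0)

lemma mdeg_eq_sum (g : F → W × W) (S : Finset F) (w : W) :
    mdeg g S w = ∑ e ∈ S, awt g w e := by
  unfold mdeg awt
  rw [Finset.card_filter, Finset.card_filter, ← Finset.sum_add_distrib]

lemma mdeg_sdiff (g : F → W × W) {S T : Finset F} (h : T ⊆ S) (w : W) :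
    mdeg g (S \ T) w + mdeg g T w = mdeg g S w := by
  simp only [mdeg_eq_sum]; exact Finset.sum_sdiff h

/-- source of an oriented edge -/
def asrc (g : F → W × W) (x : F × Bool) : W := if x.2 then (g x.1).1 else (g x.1).2

def adst (g : F → W × W) (x : F × Bool) : W := if x.2 then (g x.1).2 else (g x.1).1

lemma awt_eq (g : F → W × W) (x : F × Bool) (w : W) :
    awt g w x.1 = (if asrc g x = w then 1 else 0) + (if adst g x = w then 1 else 0) := by
  unfold awt asrc adst
  rcases x with ⟨e, b⟩
  cases b <;> simp <;> omega

inductive IsTrail (g : F → W × W) : W → W → List (F × Bool) → Prop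
  | nil (u : W) : IsTrail g u u []
  | cons (x : F × Bool) {l : List (F × Bool)} {z : W} :
      IsTrail g (adst g x) z l → IsTrail g (asrc g x) z (x :: l)

/-- incidence count of a list of oriented edges at `w`. -/
def icnt (g : F → W × W) (l : List (F × Bool)) (w : W) : ℕ :=
  (l.map fun x => awt g w x.1).sum

@[simp] lemma icnt_nil (g : F → W × W) (w : W) : icnt g [] w = 0 := rfl

@[simp] lemma icnt_cons (g : F → W × W) (x : F × Bool) (l : List (F × Bool)) (w : W) :
    icnt g (x :: l) w = awt g w x.1 + icnt g l w := rfl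

lemma icnt_parity (g : F → W × W) {u z : W} {l : List (F × Bool)} (h : IsTrail g u z l)
    (w : W) : icnt g l w % 2 = ((if u = w then 1 else 0) + (if z = w then 1 else 0)) % 2 := by
  induction h with
  | nil u => simp only [icnt_nil]; split <;> omega
  | cons x h ih =>
    rw [icnt_cons, awt_eq g x w]
    split_ifs at ih ⊢ <;> omega

end Aux
section Aux2

set_option linter.unusedSectionVars false

variable {W F : Type*} [DecidableEq W] [DecidableEq F]

lemma mdeg_eq_zero (g : F → W × W) {S : Finset F} {w : W}
    (h : ∀ e ∈ S, ((g e).1 = w ∨ (g e).2 = w) → False) : mdeg g S w = 0 := by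
  rw [mdeg_eq_sum]
  apply Finset.sum_eq_zero
  intro e he
  have h1 : ¬ (g e).1 = w := fun hh => h e he (Or.inl hh)
  have h2 : ¬ (g e).2 = w := fun hh => h e he (Or.inr hh)
  simp [awt, h1, h2]

lemma exists_incident (g : F → W × W) {S : Finset F} {w : W} (h : mdeg g S w ≠ 0) :
    ∃ e ∈ S, (g e).1 = w ∨ (g e).2 = w := by
  by_contra hc
  push_neg at hc
  exact h (mdeg_eq_zero g fun e he hi => hi.elim (hc e he).1 (hc e he).2)

/-- greedy maximal trail from `u` -/
lemma maxTrail (g : F → W × W) :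
    ∀ (n : ℕ) (S : Finset F) (u : W), S.card ≤ n →
    ∃ (l : List (F × Bool)) (z : W), IsTrail g u z l ∧ (l.map Prod.fst).Nodup ∧
      (∀ x ∈ l, x.1 ∈ S) ∧
      (∀ e ∈ S, ((g e).1 = z ∨ (g e).2 = z) → e ∈ l.map Prod.fst) ∧
      ((∃ e ∈ S, (g e).1 = u ∨ (g e).2 = u) → l ≠ []) := by
  intro n
  induction n with
  | zero =>
    intro S u hS
    refine ⟨[], u, IsTrail.nil u, by simp, by simp, ?_, ?_⟩ <;>
      simp [Finset.card_eq_zero.mp (Nat.le_zero.mp hS)]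
  | succ n ih =>
    intro S u hS
    by_cases hex : ∃ e ∈ S, (g e).1 = u ∨ (g e).2 = u
    · obtain ⟨e, heS, hinc⟩ := hex
      set b : Bool := decide ((g e).1 = u) with hb
      have hsrc : asrc g (e, b) = u := by
        unfold asrc
        by_cases h1 : (g e).1 = u
        · simp [hb, h1]
        · have h2 : (g e).2 = u := hinc.resolve_left h1
          simp [hb, h1, h2]
      have hcard : (S.erase e).card ≤ n := by
        have := Finset.card_erase_of_mem heS; omega
      obtain ⟨l', z, htr, hnd, hsub, hmax, -⟩ := ih (S.erase e) (adst g (e, b)) hcard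
      refine ⟨(e, b) :: l', z, ?_, ?_, ?_, ?_, by simp⟩
      · rw [← hsrc]; exact IsTrail.cons _ htr
      · simp only [List.map_cons, List.nodup_cons, hnd, and_true]
        intro hmem
        obtain ⟨x, hx, hx1⟩ := List.mem_map.mp hmem
        have := hsub x hx
        rw [hx1] at this
        exact (Finset.notMem_erase e S) this
      · intro x hx
        rcases List.mem_cons.mp hx with h | h
        · rw [h]; exact heS
        · exact Finset.mem_of_mem_erase (hsub x h)
      · intro e' he' hinc'
        by_cases hee : e' = e
        · simp [hee]
        · have : e' ∈ S.erase e := Finset.mem_erase.mpr ⟨hee, he'⟩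
          simp only [List.map_cons, List.mem_cons]
          exact Or.inr (hmax e' this hinc')
    · refine ⟨[], u, IsTrail.nil u, by simp, by simp, ?_, ?_⟩
      · intro e he hi
        exact ((hex ⟨e, he, hi⟩).elim : e ∈ List.map Prod.fst [])
      · intro hex'
        exact (hex hex').elim

end Aux2
section Aux3

set_option linter.unusedSectionVars false

variable {W F : Type*} [DecidableEq W] [DecidableEq F]

/-- a trail record: (start, end, oriented edges) -/
abbrev TrailRec (W F : Type*) := W × W × List (F × Bool)

def TrailsOK (g : F → W × W) (ts : List (TrailRec W F)) : Prop :=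
  ∀ t ∈ ts, IsTrail g t.1 t.2.1 t.2.2 ∧ t.2.2 ≠ []

def tEdges (ts : List (TrailRec W F)) : List (F × Bool) := ts.flatMap fun t => t.2.2

@[simp] lemma tEdges_nil : tEdges ([] : List (TrailRec W F)) = [] := rfl

@[simp] lemma tEdges_cons (t : TrailRec W F) (ts : List (TrailRec W F)) :
    tEdges (t :: ts) = t.2.2 ++ tEdges ts := rfl

def endCnt (ts : List (TrailRec W F)) (w : W) : ℕ :=
  (ts.map fun t => if t.1 = t.2.1 then 0 else
    ((if t.1 = w then 1 else 0) + (if t.2.1 = w then 1 else 0))).sum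

@[simp] lemma endCnt_nil (w : W) : endCnt ([] : List (TrailRec W F)) w = 0 := rfl

@[simp] lemma endCnt_cons (t : TrailRec W F) (ts : List (TrailRec W F)) (w : W) :
    endCnt (t :: ts) w = (if t.1 = t.2.1 then 0 else
      ((if t.1 = w then 1 else 0) + (if t.2.1 = w then 1 else 0))) + endCnt ts w := rfl

lemma icnt_eq_mdeg (g : F → W × W) (l : List (F × Bool)) (h : (l.map Prod.fst).Nodup)
    (w : W) : icnt g l w = mdeg g (l.map Prod.fst).toFinset w := by
  rw [mdeg_eq_sum, List.sum_toFinset _ h, icnt, List.map_map]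
  rfl

lemma euler_exists (g : F → W × W) :
    ∀ (n : ℕ) (S : Finset F), S.card ≤ n →
    ∃ ts : List (TrailRec W F), TrailsOK g ts ∧ ((tEdges ts).map Prod.fst).Nodup ∧
      ((tEdges ts).map Prod.fst).toFinset = S ∧
      ∀ w, endCnt ts w = (if mdeg g S w % 2 = 1 then 1 else 0) := by
  intro n
  induction n with
  | zero =>
    intro S hS
    have : S = ∅ := Finset.card_eq_zero.mp (Nat.le_zero.mp hS)
    subst this
    refine ⟨[], by intro t ht; simp at ht, by simp, by simp, fun w => ?_⟩
    have : mdeg g ∅ w = 0 := by simp [mdeg]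
    simp [this]
  | succ n ih =>
    intro S hS
    rcases Finset.eq_empty_or_nonempty S with rfl | hne
    · refine ⟨[], by intro t ht; simp at ht, by simp, by simp, fun w => ?_⟩
      have : mdeg g ∅ w = 0 := by simp [mdeg]
      simp [this]
    -- pick start vertex
    have hstart : ∃ u : W, (∃ e ∈ S, (g e).1 = u ∨ (g e).2 = u) ∧
        ((∃ w, mdeg g S w % 2 = 1) → mdeg g S u % 2 = 1) := by
      by_cases hodd : ∃ w, mdeg g S w % 2 = 1
      · obtain ⟨u, hu⟩ := hodd
        have : mdeg g S u ≠ 0 := by omega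
        obtain ⟨e, he, hi⟩ := exists_incident g this
        exact ⟨u, ⟨e, he, hi⟩, fun _ => hu⟩
      · obtain ⟨e, he⟩ := hne
        exact ⟨(g e).1, ⟨e, he, Or.inl rfl⟩, fun h => absurd h hodd⟩
    obtain ⟨u, hinc, hodd⟩ := hstart
    obtain ⟨l, z, htr, hnd, hsub, hmax, hnonnil⟩ := maxTrail g S.card S u le_rfl
    have hlne : l ≠ [] := hnonnil hinc
    set T : Finset F := (l.map Prod.fst).toFinset with hT
    have hTsub : T ⊆ S := by
      intro e he
      rw [hT, List.mem_toFinset] at he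
      obtain ⟨x, hx, rfl⟩ := List.mem_map.mp he
      exact hsub x hx
    have hTne : T.Nonempty := by
      rcases l with - | ⟨x, l'⟩
      · exact absurd rfl hlne
      · exact ⟨x.1, by simp [hT]⟩
    have hS'card : (S \ T).card ≤ n := by
      have h1 : (S \ T).card < S.card := by
        apply Finset.card_lt_card
        rw [Finset.ssubset_iff_of_subset (Finset.sdiff_subset)]
        obtain ⟨e, he⟩ := hTne
        exact ⟨e, hTsub he, by simp [Finset.mem_sdiff, he]⟩
      omega
    obtain ⟨ts', hok', hnd', hcov', hend'⟩ := ih (S \ T) hS'card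
    -- key counting facts
    have hicnt : ∀ w, icnt g l w = mdeg g T w := fun w => icnt_eq_mdeg g l hnd w
    have hadd : ∀ w, mdeg g (S \ T) w + mdeg g T w = mdeg g S w := fun w => mdeg_sdiff g hTsub w
    have hz0 : mdeg g (S \ T) z = 0 := by
      apply mdeg_eq_zero
      intro e he hi
      rw [Finset.mem_sdiff] at he
      exact he.2 (by rw [hT, List.mem_toFinset]; exact hmax e he.1 hi)
    have hpar : ∀ w, icnt g l w % 2 =
        ((if u = w then 1 else 0) + (if z = w then 1 else 0)) % 2 := icnt_parity g htr
    -- edges disjointness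
    have hdisj : ∀ x ∈ l.map Prod.fst, x ∉ (tEdges ts').map Prod.fst := by
      intro x hx hx'
      have h1 : x ∈ T := by rw [hT, List.mem_toFinset]; exact hx
      have h2 : x ∈ S \ T := by
        rw [← hcov']
        exact List.mem_toFinset.mpr hx'
      rw [Finset.mem_sdiff] at h2
      exact h2.2 h1
    refine ⟨(u, z, l) :: ts', ?_, ?_, ?_, ?_⟩
    · intro t ht
      rcases List.mem_cons.mp ht with rfl | ht'
      · exact ⟨htr, hlne⟩
      · exact hok' t ht'
    · rw [tEdges_cons, List.map_append]
      exact List.Nodup.append hnd hnd' hdisj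
    · rw [tEdges_cons, List.map_append, List.toFinset_append, hcov', ← hT]
      rw [Finset.union_comm, Finset.sdiff_union_of_subset hTsub]
    · intro w
      rw [endCnt_cons, hend' w]
      have h1 := hicnt w
      have h2 := hadd w
      have h3 := hpar w
      have h6 := hpar z
      rw [hicnt z] at h6
      have h9 := hpar u
      rw [hicnt u] at h9
      have h5 := hadd z
      have h8 := hadd u
      by_cases hodd' : ∃ w, mdeg g S w % 2 = 1
      · have huodd := hodd hodd'
        have huz : u ≠ z := by
          intro h
          rw [if_pos h.symm] at h9
          rw [← h] at hz0
          simp only [eq_self_iff_true, if_true] at h9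
          omega
        have hzu : ¬ z = u := fun h => huz h.symm
        rw [if_neg huz]
        simp only [huz, hzu, if_false, eq_self_iff_true, if_true] at h6
        by_cases hwu : u = w
        · subst hwu
          simp only [eq_self_iff_true, if_true, hzu, if_false] at h3 ⊢
          split_ifs <;> omega
        · by_cases hwz : z = w
          · subst hwz
            simp only [eq_self_iff_true, if_true, hwu, if_false] at h3 ⊢
            split_ifs <;> omega
          · simp only [hwu, hwz, if_false] at h3 ⊢
            split_ifs <;> omega
      · push_neg at hodd'
        have hw1 := hodd' w
        have hw2 := hodd' z
        have hzu : z = u := by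
          by_contra hzu
          have huz : ¬ u = z := fun h => hzu h.symm
          simp only [huz, if_false, eq_self_iff_true, if_true] at h6
          omega
        subst hzu
        simp only [eq_self_iff_true, if_true, zero_add]
        by_cases hwz : z = w
        · subst hwz
          simp only [eq_self_iff_true, if_true] at h3
          split_ifs <;> omega
        · simp only [hwz, if_false] at h3
          split_ifs <;> omega
end Aux3
section Aux4

set_option linter.unusedSectionVars false

variable {W F : Type*} [DecidableEq W] [DecidableEq F]

def sg (b : Bool) : ℤ := if b then 1 else -1

@[simp] lemma sg_not (b : Bool) : sg (!b) = - sg b := by cases b <;> simp [sg]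

lemma sg_abs (b : Bool) : sg b = 1 ∨ sg b = -1 := by cases b <;> simp [sg]

/-- edges of an alternately 2-colored trail that get color `true`, starting with `s`. -/
def altT : Bool → List (F × Bool) → List F
  | _, [] => []
  | s, x :: l => if s then x.1 :: altT false l else altT true l

lemma altT_sublist (s : Bool) (l : List (F × Bool)) : (altT s l).Sublist (l.map Prod.fst) := by
  induction l generalizing s with
  | nil => simp [altT]
  | cons x l ih =>
    rw [List.map_cons]
    unfold altT
    cases s
    · simp only [if_neg Bool.false_ne_true]
      exact (ih true).cons x.1
    · simp only [if_pos rfl]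
      exact (ih false).cons₂ x.1

lemma altT_length (l : List (F × Bool)) :
    2 * (altT true l).length = l.length + l.length % 2 ∧
    2 * (altT false l).length = l.length - l.length % 2 := by
  induction l with
  | nil => simp [altT]
  | cons x l ih =>
    unfold altT
    simp
    omega

/-- signed (color true minus color false) incidence count at `w` of alternately colored list. -/
def altD (g : F → W × W) (w : W) : Bool → List (F × Bool) → ℤ
  | _, [] => 0
  | s, x :: l => sg s * (awt g w x.1 : ℤ) + altD g w (!s) l

lemma altD_eq (g : F → W × W) (w : W) (s : Bool) (l : List (F × Bool)) :
    altD g w s l = 2 * ((altT s l).map (awt g w)).sum - (icnt g l w : ℤ) := by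
  induction l generalizing s with
  | nil => simp [altD, altT]
  | cons x l ih =>
    unfold altD altT
    rw [icnt_cons]
    cases s
    · rw [if_neg Bool.false_ne_true, Bool.not_false, ih true]
      simp only [sg, if_neg Bool.false_ne_true]
      push_cast
      ring
    · rw [if_pos rfl, Bool.not_true, ih false]
      simp only [sg, if_pos rfl, List.map_cons, List.sum_cons]
      push_cast
      ring

def lastc (s : Bool) (l : List (F × Bool)) : Bool := if l.length % 2 = 1 then s else !s

lemma lastc_cons (s : Bool) (x : F × Bool) (l : List (F × Bool)) :
    lastc s (x :: l) = lastc (!s) l := by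
  unfold lastc
  simp only [List.length_cons]
  by_cases h : l.length % 2 = 1
  · rw [if_pos h, if_neg (by omega)]
  · rw [if_neg h, if_pos (by omega)]
    simp

lemma IsTrail_nil_eq {g : F → W × W} {a b : W} (h : IsTrail g a b []) : a = b := by
  cases h
  rfl

lemma class_flip (g : F → W × W) (β : W → Bool)
    (hb : ∀ e, β (g e).1 = false ∧ β (g e).2 = true) (x : F × Bool) :
    β (adst g x) = !(β (asrc g x)) := by
  rcases x with ⟨e, b⟩
  cases b <;> simp [asrc, adst, (hb e).1, (hb e).2]

lemma altD_trail (g : F → W × W) {u z : W} {l : List (F × Bool)} (h : IsTrail g u z l)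
    (hne : l ≠ []) (s : Bool) (w : W) :
    altD g w s l = sg s * (if u = w then 1 else 0) +
      sg (lastc s l) * (if z = w then 1 else 0) := by
  induction h generalizing s with
  | nil u => exact absurd rfl hne
  | @cons x l z htl ih =>
    rcases l with - | ⟨y, l'⟩
    · rw [← IsTrail_nil_eq htl]
      unfold altD
      rw [awt_eq g x w]
      unfold altD
      have : lastc s [x] = s := by unfold lastc; simp
      rw [this]
      push_cast
      ring
    · have hne' : (y :: l') ≠ [] := by simp
      unfold altD
      rw [ih hne' (!s), awt_eq g x w, lastc_cons s x (y :: l')]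
      push_cast
      rw [sg_not]
      ring

/-- bipartiteness: along a trail the class alternates -/
lemma trail_class (g : F → W × W) (β : W → Bool)
    (hb : ∀ e, β (g e).1 = false ∧ β (g e).2 = true) {u z : W} {l : List (F × Bool)}
    (h : IsTrail g u z l) : β z = if l.length % 2 = 1 then !(β u) else β u := by
  induction h with
  | nil u => simp
  | @cons x l z htl ih =>
    rw [ih, class_flip g β hb x]
    simp only [List.length_cons]
    by_cases hp : l.length % 2 = 1
    · rw [if_pos hp, if_neg (by omega)]
      simp
    · rw [if_neg hp, if_pos (by omega)]

lemma trail_closed_even (g : F → W × W) (β : W → Bool)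
    (hb : ∀ e, β (g e).1 = false ∧ β (g e).2 = true) {u : W} {l : List (F × Bool)}
    (h : IsTrail g u u l) : l.length % 2 = 0 := by
  have := trail_class g β hb h
  by_cases hp : l.length % 2 = 1
  · rw [if_pos hp] at this
    exact absurd this (by cases β u <;> simp)
  · omega

end Aux4
section Aux5

set_option linter.unusedSectionVars false

variable {W F : Type*} [DecidableEq W] [DecidableEq F]

lemma bal2core (g : F → W × W) :
    ∀ ts : List (TrailRec W F), TrailsOK g ts →
    (∀ t ∈ ts, t.1 = t.2.1 → t.2.2.length % 2 = 0) →
    ∀ M : ℤ, -1 ≤ M → M ≤ 1 →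
    ∃ C : List F, C.Sublist ((tEdges ts).map Prod.fst) ∧
      (∀ w, |2 * ((C.map (awt g w)).sum : ℤ) - icnt g (tEdges ts) w| ≤ endCnt ts w) ∧
      |M + 2 * (C.length : ℤ) - (tEdges ts).length| ≤ 1 := by
  intro ts
  induction ts with
  | nil =>
    intro _ _ M h1 h2
    refine ⟨[], by simp, by simp, by simpa using abs_le.mpr ⟨h1, h2⟩⟩
  | cons t ts ih =>
    intro hok hcl M h1 h2
    obtain ⟨htr, hne⟩ := hok t List.mem_cons_self
    have hlena := (altT_length (t.2.2)).1
    have hlenb := (altT_length (t.2.2)).2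
    have hmle : t.2.2.length % 2 ≤ 1 := by omega
    obtain ⟨s, hδ1, hδ2⟩ : ∃ s : Bool,
        -1 ≤ M + (2 * ((altT s t.2.2).length : ℤ) - t.2.2.length) ∧
        M + (2 * ((altT s t.2.2).length : ℤ) - t.2.2.length) ≤ 1 := by
      by_cases hM : M ≤ 0
      · exact ⟨true, by omega, by omega⟩
      · exact ⟨false, by omega, by omega⟩
    obtain ⟨C', hsub', hw', hlen'⟩ := ih (fun t' ht' => hok t' (List.mem_cons_of_mem t ht'))
      (fun t' ht' => hcl t' (List.mem_cons_of_mem t ht'))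
      (M + (2 * ((altT s t.2.2).length : ℤ) - t.2.2.length)) hδ1 hδ2
    refine ⟨altT s t.2.2 ++ C', ?_, ?_, ?_⟩
    · rw [tEdges_cons, List.map_append]
      exact (altT_sublist s t.2.2).append hsub'
    · intro w
      have hD := altD_eq g w s t.2.2
      have h2' := hw' w
      rw [abs_le] at h2'
      have e1 : ((altT s t.2.2 ++ C').map (awt g w)).sum =
          ((altT s t.2.2).map (awt g w)).sum + (C'.map (awt g w)).sum := by
        rw [List.map_append, List.sum_append]
      have e2 : icnt g (tEdges (t :: ts)) w = icnt g t.2.2 w + icnt g (tEdges ts) w := by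
        rw [tEdges_cons, icnt, List.map_append, List.sum_append]
        rfl
      have hDb : |altD g w s t.2.2| ≤ ((if t.1 = t.2.1 then 0 else
          ((if t.1 = w then 1 else 0) + (if t.2.1 = w then 1 else 0)) : ℕ) : ℤ) := by
        by_cases hcl' : t.1 = t.2.1
        · rw [if_pos hcl']
          have heven := hcl t List.mem_cons_self hcl'
          have hlast : lastc s t.2.2 = !s := by unfold lastc; rw [if_neg (by omega)]
          rw [altD_trail g (hcl' ▸ htr) hne s w, hlast, sg_not]
          simp only [Nat.cast_zero, neg_mul, abs_nonpos_iff]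
          ring
        · rw [if_neg hcl']
          rw [altD_trail g htr hne s w]
          rcases sg_abs s with h | h <;> rcases sg_abs (lastc s t.2.2) with h' | h' <;>
            rw [h, h'] <;> split_ifs <;> norm_num
      rw [hD, abs_le] at hDb
      rw [e1, e2, endCnt_cons, abs_le]
      constructor <;> omega
    · rw [tEdges_cons, List.length_append, List.length_append]
      rw [abs_le] at hlen' ⊢
      constructor <;> omega

lemma bal2 (g : F → W × W) (β : W → Bool)
    (hb : ∀ e, β (g e).1 = false ∧ β (g e).2 = true) (S : Finset F) :
    ∃ S1 : Finset F, S1 ⊆ S ∧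
      (∀ w, mdeg g S1 w ≤ mdeg g (S \ S1) w + 1 ∧ mdeg g (S \ S1) w ≤ mdeg g S1 w + 1) ∧
      S1.card ≤ (S \ S1).card + 1 ∧ (S \ S1).card ≤ S1.card + 1 := by
  obtain ⟨ts, hok, hnd, hcov, hends⟩ := euler_exists g S.card S le_rfl
  have hcl : ∀ t ∈ ts, t.1 = t.2.1 → t.2.2.length % 2 = 0 := by
    intro t ht hteq
    exact trail_closed_even g β hb (hteq ▸ (hok t ht).1)
  obtain ⟨C, hsub, hw, hlen⟩ := bal2core g ts hok hcl 0 (by norm_num) (by norm_num)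
  have hCnd : C.Nodup := hsub.nodup hnd
  set S1 := C.toFinset with hS1
  have hS1sub : S1 ⊆ S := by
    intro e he
    rw [hS1, List.mem_toFinset] at he
    rw [← hcov, List.mem_toFinset]
    exact hsub.mem he
  have hdeg1 : ∀ w, mdeg g S1 w = (C.map (awt g w)).sum := by
    intro w
    rw [hS1, mdeg_eq_sum, List.sum_toFinset _ hCnd]
  have hdegS : ∀ w, mdeg g S w = icnt g (tEdges ts) w := by
    intro w
    rw [← hcov, ← icnt_eq_mdeg g _ hnd]
  have hdeg2 : ∀ w, mdeg g (S \ S1) w + mdeg g S1 w = mdeg g S w := fun w => mdeg_sdiff g hS1sub w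
  have hcard1 : S1.card = C.length := by rw [hS1, List.toFinset_card_of_nodup hCnd]
  have hcardS : S.card = (tEdges ts).length := by
    rw [← hcov, List.toFinset_card_of_nodup hnd, List.length_map]
  have hcard2 : (S \ S1).card + S1.card = S.card := by
    rw [Finset.card_sdiff_of_subset hS1sub]
    have := Finset.card_le_card hS1sub
    omega
  refine ⟨S1, hS1sub, fun w => ?_, ?_⟩
  · have h1 := hw w
    rw [abs_le] at h1
    have h2 := hends w
    have h3 : endCnt ts w ≤ 1 := by rw [h2]; split_ifs <;> omega
    have h4 := hdeg1 w
    have h5 := hdeg2 w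
    have h6 := hdegS w
    rw [← h4, ← h6] at h1
    omega
  · rw [abs_le] at hlen
    push_cast at hlen
    omega

end Aux5
section Aux6

set_option linter.unusedSectionVars false

variable {W F : Type*} [DecidableEq W] [DecidableEq F] [Fintype W] [Fintype F]

lemma sq_helper (u v : ℤ) (hv : -1 ≤ v) (hv' : v ≤ 1) (t : ℤ) (ht : u - v = 2*t) :
    v^2 ≤ u^2 ∧ (2 ≤ u ∨ u ≤ -2 → v^2 < u^2) := by
  have h3 : v = -1 ∨ v = 0 ∨ v = 1 := by omega
  constructor
  · rcases h3 with rfl | rfl | rfl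
    · have h : u ≤ -1 ∨ 1 ≤ u := by omega
      rcases h with h | h <;> nlinarith
    · simpa using sq_nonneg u
    · have h : u ≤ -1 ∨ 1 ≤ u := by omega
      rcases h with h | h <;> nlinarith
  · intro hu
    have h4 : v^2 ≤ 1 := by rcases h3 with rfl | rfl | rfl <;> norm_num
    rcases hu with h | h <;> nlinarith

lemma sq_bal {a b a' b' : ℕ} (hs : a' + b' = a + b) (h1 : a' ≤ b' + 1) (h2 : b' ≤ a' + 1) :
    a'^2 + b'^2 ≤ a^2 + b^2 ∧ ((b + 1 < a ∨ a + 1 < b) → a'^2 + b'^2 < a^2 + b^2) := by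
  have hv : -1 ≤ (a' : ℤ) - b' := by omega
  have hv' : (a' : ℤ) - b' ≤ 1 := by omega
  have ht : (a : ℤ) - b - ((a' : ℤ) - b') = 2 * ((a : ℤ) - a') := by omega
  obtain ⟨k1, k2⟩ := sq_helper ((a : ℤ) - b) ((a' : ℤ) - b') hv hv' _ ht
  have hsz : (a' : ℤ) + b' = (a : ℤ) + b := by exact_mod_cast hs
  have e1 : 2*((a' : ℤ)^2 + (b' : ℤ)^2) = ((a : ℤ) + b)^2 + ((a' : ℤ) - b')^2 := by
    rw [← hsz]; ring
  have e2 : 2*((a : ℤ)^2 + (b : ℤ)^2) = ((a : ℤ) + b)^2 + ((a : ℤ) - b)^2 := by ring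
  constructor
  · zify
    nlinarith [k1]
  · intro h
    have hu : 2 ≤ (a : ℤ) - b ∨ (a : ℤ) - b ≤ -2 := by omega
    have := k2 hu
    zify
    nlinarith [this]

variable {k : ℕ}

def colCl (c : F → Fin k) (i : Fin k) : Finset F := Finset.univ.filter fun e => c e = i

def potG (g : F → W × W) (S : Finset F) : ℕ := S.card^2 + ∑ w : W, (mdeg g S w)^2

def pot (g : F → W × W) (c : F → Fin k) : ℕ := ∑ i : Fin k, potG g (colCl c i)

def BalCol (g : F → W × W) (c : F → Fin k) : Prop :=
  ∀ i j : Fin k, (colCl c i).card ≤ (colCl c j).card + 1 ∧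
    ∀ w, mdeg g (colCl c i) w ≤ mdeg g (colCl c j) w + 1

lemma improve (g : F → W × W) (β : W → Bool)
    (hb : ∀ e, β (g e).1 = false ∧ β (g e).2 = true) (c : F → Fin k)
    (hbad : ¬ BalCol g c) : ∃ c' : F → Fin k, pot g c' < pot g c := by
  unfold BalCol at hbad
  push_neg at hbad
  obtain ⟨i, j, hbad⟩ := hbad
  have hbad' : (colCl c j).card + 1 < (colCl c i).card ∨
      ∃ w, mdeg g (colCl c j) w + 1 < mdeg g (colCl c i) w := by
    by_cases hA : (colCl c i).card ≤ (colCl c j).card + 1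
    · refine Or.inr ?_
      have := hbad hA
      obtain ⟨w, hw⟩ := this
      exact ⟨w, by omega⟩
    · exact Or.inl (by omega)
  have hij : i ≠ j := by
    rintro rfl
    rcases hbad' with h | ⟨w, h⟩ <;> omega
  classical
  set S : Finset F := colCl c i ∪ colCl c j with hS
  have hdisj : Disjoint (colCl c i) (colCl c j) := by
    rw [Finset.disjoint_left]
    intro e hei hej
    simp only [colCl, Finset.mem_filter] at hei hej
    exact hij (hei.2 ▸ hej.2 ▸ rfl)
  obtain ⟨S1, hsub, hw, hc1, hc2⟩ := bal2 g β hb S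
  set c' : F → Fin k := fun e => if e ∈ S1 then i else if e ∈ S then j else c e with hc'
  have hmem : ∀ e, e ∈ S ↔ (c e = i ∨ c e = j) := by
    intro e
    simp [hS, colCl, Finset.mem_union, Finset.mem_filter]
  have hEi : colCl c' i = S1 := by
    ext e
    simp only [colCl, Finset.mem_filter, Finset.mem_univ, true_and, hc']
    constructor
    · intro h
      by_contra hne
      rw [if_neg hne] at h
      split_ifs at h with h2
      · exact hij h.symm |>.elim
      · exact h2 ((hmem e).mpr (Or.inl h))
    · intro h
      rw [if_pos h]
  have hEj : colCl c' j = S \ S1 := by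
    ext e
    simp only [colCl, Finset.mem_filter, Finset.mem_univ, true_and, hc', Finset.mem_sdiff]
    constructor
    · intro h
      split_ifs at h with h1 h2
      · exact (hij h).elim
      · exact ⟨h2, h1⟩
      · exact ⟨(hmem e).mpr (Or.inr h), h1⟩
    · rintro ⟨h1, h2⟩
      rw [if_neg h2, if_pos h1]
  have hEo : ∀ l, l ≠ i → l ≠ j → colCl c' l = colCl c l := by
    intro l hli hlj
    ext e
    simp only [colCl, Finset.mem_filter, Finset.mem_univ, true_and, hc']
    split_ifs with h1 h2
    · constructor
      · intro h; exact (hli h.symm).elim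
      · intro h
        have := (hmem e).mp (hsub h1)
        rcases this with h' | h' <;> [exact (hli (h ▸ h')).elim; exact (hlj (h ▸ h')).elim]
    · constructor
      · intro h; exact (hlj h.symm).elim
      · intro h
        have := (hmem e).mp h2
        rcases this with h' | h' <;> [exact (hli (h ▸ h')).elim; exact (hlj (h ▸ h')).elim]
    · exact Iff.rfl
  -- sums split
  have hjmem : j ∈ (Finset.univ : Finset (Fin k)).erase i :=
    Finset.mem_erase.mpr ⟨fun h => hij h.symm, Finset.mem_univ j⟩
  have hsplit : ∀ c0 : F → Fin k, pot g c0 = potG g (colCl c0 i) + potG g (colCl c0 j) +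
      ∑ l ∈ (Finset.univ.erase i).erase j, potG g (colCl c0 l) := by
    intro c0
    rw [pot, ← Finset.add_sum_erase _ _ (Finset.mem_univ i), ← Finset.add_sum_erase _ _ hjmem]
    ring
  refine ⟨c', ?_⟩
  rw [hsplit c', hsplit c]
  have hrest : ∑ l ∈ (Finset.univ.erase i).erase j, potG g (colCl c' l) =
      ∑ l ∈ (Finset.univ.erase i).erase j, potG g (colCl c l) := by
    apply Finset.sum_congr rfl
    intro l hl
    rw [Finset.mem_erase, Finset.mem_erase] at hl
    rw [hEo l hl.2.1 hl.1]
  rw [hrest, hEi, hEj]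
  have key : potG g S1 + potG g (S \ S1) < potG g (colCl c i) + potG g (colCl c j) := by
    have hcards : S1.card + (S \ S1).card = (colCl c i).card + (colCl c j).card := by
      have h1 : (S \ S1).card = S.card - S1.card := Finset.card_sdiff_of_subset hsub
      have h2 : S1.card ≤ S.card := Finset.card_le_card hsub
      have h3 : S.card = (colCl c i).card + (colCl c j).card := by
        rw [hS, Finset.card_union_of_disjoint hdisj]
      omega
    have hdegs : ∀ w, mdeg g S1 w + mdeg g (S \ S1) w =
        mdeg g (colCl c i) w + mdeg g (colCl c j) w := by
      intro w
      have h1 := mdeg_sdiff g hsub w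
      have h2 : mdeg g S w = mdeg g (colCl c i) w + mdeg g (colCl c j) w := by
        rw [hS, mdeg_eq_sum, Finset.sum_union hdisj, mdeg_eq_sum, mdeg_eq_sum]
      omega
    have hcard_bal := sq_bal hcards hc1 hc2
    have hdeg_bal : ∀ w, (mdeg g S1 w)^2 + (mdeg g (S \ S1) w)^2 ≤
        (mdeg g (colCl c i) w)^2 + (mdeg g (colCl c j) w)^2 ∧
        ((mdeg g (colCl c j) w + 1 < mdeg g (colCl c i) w ∨
          mdeg g (colCl c i) w + 1 < mdeg g (colCl c j) w) →
          (mdeg g S1 w)^2 + (mdeg g (S \ S1) w)^2 <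
          (mdeg g (colCl c i) w)^2 + (mdeg g (colCl c j) w)^2) := fun w =>
      sq_bal (hdegs w) (hw w).1 (hw w).2
    have hsum_le : ∑ w : W, ((mdeg g S1 w)^2 + (mdeg g (S \ S1) w)^2) ≤
        ∑ w : W, ((mdeg g (colCl c i) w)^2 + (mdeg g (colCl c j) w)^2) :=
      Finset.sum_le_sum fun w _ => (hdeg_bal w).1
    unfold potG
    rcases hbad' with hcb | ⟨w0, hvb⟩
    · have hstrict := hcard_bal.2 (Or.inl (by omega))
      have := hsum_le
      simp only [Finset.sum_add_distrib] at this
      omega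
    · have hstrict : ∑ w : W, ((mdeg g S1 w)^2 + (mdeg g (S \ S1) w)^2) <
          ∑ w : W, ((mdeg g (colCl c i) w)^2 + (mdeg g (colCl c j) w)^2) := by
        apply Finset.sum_lt_sum (fun w _ => (hdeg_bal w).1)
        exact ⟨w0, Finset.mem_univ w0, (hdeg_bal w0).2 (Or.inl (by omega))⟩
      have := hcard_bal.1
      simp only [Finset.sum_add_distrib] at hstrict
      omega
  omega

lemma exists_balcol (g : F → W × W) (β : W → Bool)
    (hb : ∀ e, β (g e).1 = false ∧ β (g e).2 = true) (hk : 0 < k) :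
    ∃ c : F → Fin k, BalCol g c := by
  suffices h : ∀ N (c : F → Fin k), pot g c ≤ N → ∃ c', BalCol g c' by
    exact h (pot g (fun _ => ⟨0, hk⟩)) _ le_rfl
  intro N
  induction N using Nat.strong_induction_on with
  | _ N ih =>
    intro c hc
    by_cases h : BalCol g c
    · exact ⟨c, h⟩
    · obtain ⟨c', hc'⟩ := improve g β hb c h
      exact ih (pot g c') (by omega) c' le_rfl

end Aux6
section Aux7

set_option linter.unusedSectionVars false

variable {W F : Type*} [DecidableEq W] [DecidableEq F]

lemma trail_flow (g : F → W × W) {u z : W} {l : List (F × Bool)} (h : IsTrail g u z l)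
    (w : W) : (l.countP (fun x => asrc g x = w) : ℤ) - l.countP (fun x => adst g x = w) =
      (if u = w then 1 else 0) - (if z = w then 1 else 0) := by
  induction h with
  | nil u => simp
  | @cons x l z htl ih =>
    simp only [List.countP_cons, decide_eq_true_eq]
    push_cast
    split_ifs at ih ⊢ <;> omega

lemma ts_flow (g : F → W × W) (ts : List (TrailRec W F)) (hok : TrailsOK g ts) (w : W) :
    |((tEdges ts).countP (fun x => asrc g x = w) : ℤ) -
      (tEdges ts).countP (fun x => adst g x = w)| ≤ endCnt ts w := by
  induction ts with
  | nil => simp [tEdges]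
  | cons t ts ih =>
    obtain ⟨htr, -⟩ := hok t List.mem_cons_self
    have ih' := ih (fun t' ht' => hok t' (List.mem_cons_of_mem t ht'))
    rw [tEdges_cons, List.countP_append, List.countP_append, endCnt_cons]
    have hf := trail_flow g htr w
    rw [abs_le] at ih' ⊢
    push_cast
    have hcontrib : |(if t.1 = w then (1:ℤ) else 0) - (if t.2.1 = w then 1 else 0)| ≤
        (if t.1 = t.2.1 then 0 else ((if t.1 = w then 1 else 0) + (if t.2.1 = w then 1 else 0)) : ℕ) := by
      by_cases hc : t.1 = t.2.1
      · rw [if_pos hc, hc]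
        simp
      · rw [if_neg hc]
        split_ifs <;> simp <;> omega
    rw [abs_le] at hcontrib
    constructor <;> push_cast at hcontrib ih' hf ⊢ <;> omega

lemma count_bridge [Fintype F] (L : List (F × Bool)) (hnd : (L.map Prod.fst).Nodup)
    (hcov : (L.map Prod.fst).toFinset = Finset.univ) (o : F → Bool)
    (ho : ∀ x ∈ L, x.2 = o x.1) (Q : F × Bool → Prop) [DecidablePred Q] :
    (Finset.univ.filter fun e => Q (e, o e)).card = L.countP (fun x => decide (Q x)) := by
  have h1 : L.countP (fun x => decide (Q x)) =
      (L.map Prod.fst).countP (fun e => decide (Q (e, o e))) := by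
    rw [List.countP_map]
    apply List.countP_congr
    intro x hx
    have hx2 : (x.1, o x.1) = x := by
      have := ho x hx
      exact Prod.ext rfl this.symm
    simp only [Function.comp_apply]
    rw [hx2]
  rw [h1, ← hcov]
  have h2 : Finset.filter (fun e => Q (e, o e)) (List.map Prod.fst L).toFinset
      = ((List.map Prod.fst L).filter (fun e => decide (Q (e, o e)))).toFinset := by
    rw [List.toFinset_filter]
    apply Finset.filter_congr
    intro e _
    simp
  rw [h2, List.toFinset_card_of_nodup (hnd.filter _), List.countP_eq_length_filter]

lemma orient_exists (g : F → W × W) [Fintype F] :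
    ∃ f : F → W × W, (∀ e, (f e = g e) ∨ (f e = ((g e).2, (g e).1))) ∧
      ∀ w, (Finset.univ.filter fun e => (f e).1 = w).card ≤
              (Finset.univ.filter fun e => (f e).2 = w).card + 1 ∧
           (Finset.univ.filter fun e => (f e).2 = w).card ≤
              (Finset.univ.filter fun e => (f e).1 = w).card + 1 := by
  obtain ⟨ts, hok, hnd, hcov, hends⟩ := euler_exists g Finset.univ.card Finset.univ le_rfl
  set L := tEdges ts with hL
  set o : F → Bool := fun e => ((L.find? (fun x => decide (x.1 = e))).getD (e, true)).2 with ho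
  have hmemL : ∀ e : F, (e, o e) ∈ L := by
    intro e
    have he : e ∈ L.map Prod.fst := by
      rw [← List.mem_toFinset, hcov]
      exact Finset.mem_univ e
    rcases hfind : L.find? (fun x => decide (x.1 = e)) with - | x
    · exfalso
      obtain ⟨x, hx, rfl⟩ := List.mem_map.mp he
      have := List.find?_eq_none.mp hfind x hx
      simp at this
    · have hxm : x ∈ L := List.mem_of_find?_eq_some hfind
      have hx1 : x.1 = e := by have := List.find?_some hfind; simpa using this
      have : o e = x.2 := by rw [ho]; simp [hfind]
      rw [this, ← hx1]
      exact hxm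
  have hinj := List.inj_on_of_nodup_map hnd
  have huniq : ∀ x ∈ L, x.2 = o x.1 := by
    intro x hx
    have h2 := hmemL x.1
    have := hinj hx h2 rfl
    exact (Prod.ext_iff.mp this).2
  set f : F → W × W := fun e => (asrc g (e, o e), adst g (e, o e)) with hf
  refine ⟨f, ?_, ?_⟩
  · intro e
    rw [hf]
    cases hoe : o e
    · right; simp [asrc, adst, hoe]
    · left; simp [asrc, adst, hoe]
  · intro w
    have hsrc : (Finset.univ.filter fun e => (f e).1 = w).card =
        L.countP (fun x => decide (asrc g x = w)) :=
      count_bridge L hnd hcov o huniq (fun x => asrc g x = w)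
    have hdst : (Finset.univ.filter fun e => (f e).2 = w).card =
        L.countP (fun x => decide (adst g x = w)) :=
      count_bridge L hnd hcov o huniq (fun x => adst g x = w)
    have hflow := ts_flow g ts hok w
    rw [abs_le] at hflow
    have hend1 : endCnt ts w ≤ 1 := by rw [hends w]; split_ifs <;> omega
    rw [← hL] at hflow
    constructor <;> rw [hsrc, hdst] <;> omega

end Aux7
section Aux8

lemma ceil_comp (n a b : ℕ) (ha : 0 < a) (hb : 0 < b) :
    ((n + (a-1))/a + (b-1))/b = (n + (a*b-1))/(a*b) := by
  rcases n with - | m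
  · have e1 : (0 + (a-1))/a = 0 := by
      apply Nat.div_eq_of_lt; omega
    rw [e1]
    have e2 : (0 + (b-1))/b = 0 := by apply Nat.div_eq_of_lt; omega
    rw [e2]
    symm
    apply Nat.div_eq_of_lt
    have := Nat.mul_pos ha hb
    omega
  · have e1 : m + 1 + (a-1) = m + a := by omega
    rw [e1, Nat.add_div_right _ ha]
    have e2 : m / a + 1 + (b - 1) = m / a + b := by omega
    rw [e2, Nat.add_div_right _ hb, Nat.div_div_eq_div_mul]
    have e3 : m + 1 + (a*b-1) = m + a*b := by
      have := Nat.mul_pos ha hb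
      omega
    rw [e3, Nat.add_div_right _ (Nat.mul_pos ha hb)]

lemma ceilA (d k : ℕ) (hk : 0 < k) : ((d+1)/2 + (k-1))/k = (d + (2*k-1))/(2*k) :=
  ceil_comp d 2 k (by norm_num) hk

lemma ceilB (d k : ℕ) (hk : 0 < k) : (d/2 + (k-1))/k = ((d-1) + (2*k-1))/(2*k) := by
  have h := ceil_comp (d-1) 2 k (by norm_num) hk
  have e : (d - 1 + (2-1))/2 = d/2 := by omega
  rw [e] at h
  exact h

lemma fiber_bounds {k : ℕ} (hk : 0 < k) (x : Fin k → ℕ) (m : ℕ)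
    (hsum : ∑ j : Fin k, x j = m) (hbal : ∀ i j, x i ≤ x j + 1) (i : Fin k) :
    m / k ≤ x i ∧ x i ≤ (m + (k-1))/k ∧ k * x i ≤ m + (k-1) ∧ m ≤ k * x i + (k-1) := by
  obtain ⟨n, rfl⟩ : ∃ n, k = n + 1 := ⟨k - 1, by omega⟩
  have hmem : i ∈ (Finset.univ : Finset (Fin (n+1))) := Finset.mem_univ i
  have hcard : (Finset.univ.erase i).card = n := by
    rw [Finset.card_erase_of_mem hmem, Finset.card_univ, Fintype.card_fin]
    omega
  have he : x i + ∑ j ∈ Finset.univ.erase i, x j = m := by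
    rw [Finset.add_sum_erase _ x hmem, hsum]
  have h2 : n * x i ≤ (∑ j ∈ Finset.univ.erase i, x j) + n := by
    calc n * x i = ∑ _j ∈ Finset.univ.erase i, x i := by
          rw [Finset.sum_const, hcard, smul_eq_mul]
      _ ≤ ∑ j ∈ Finset.univ.erase i, (x j + 1) := Finset.sum_le_sum fun j _ => hbal i j
      _ = (∑ j ∈ Finset.univ.erase i, x j) + n := by
          rw [Finset.sum_add_distrib, Finset.sum_const, hcard, smul_eq_mul, mul_one]
  have h3 : ∑ j ∈ Finset.univ.erase i, x j ≤ n * x i + n := by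
    calc ∑ j ∈ Finset.univ.erase i, x j ≤ ∑ _j ∈ Finset.univ.erase i, (x i + 1) :=
          Finset.sum_le_sum fun j _ => hbal j i
      _ = n * x i + n := by
          rw [Finset.sum_add_distrib, Finset.sum_const, Finset.sum_const, hcard,
            smul_eq_mul, smul_eq_mul, mul_one]
  have e : (n+1) * x i = n * x i + x i := by ring
  have hup : (n+1) * x i ≤ m + n := by linarith
  have hdn : m ≤ (n+1) * x i + n := by linarith
  refine ⟨?_, ?_, by simpa using hup, by simpa using hdn⟩
  · rw [Nat.div_le_iff_le_mul_add_pred (by omega : 0 < n + 1)]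
    omega
  · rw [Nat.le_div_iff_mul_le (by omega : 0 < n + 1)]
    have : x i * (n+1) = (n+1) * x i := by ring
    omega

end Aux8

/-- Anstee's theorem: every multigraph has an edge-decomposition into `k` factors with
equitable edge counts and near-equitable degrees. -/
theorem anstee_factorization [Fintype V] [Fintype E] [DecidableEq V]
    (ends : E → V × V) (k : ℕ) (hk : 0 < k) :
    ∃ c : E → Fin k,
      (∀ i : Fin k,
        |(((univ.filter fun e : E => c e = i).card : ℝ)) -
          (Fintype.card E : ℝ) / (k : ℝ)| < 1) ∧
      (∀ v : V, ∀ i : Fin k,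
        mdeg ends univ v / (2 * k) + (mdeg ends univ v + 1) / (2 * k) ≤
            mdeg ends (univ.filter fun e => c e = i) v ∧
        mdeg ends (univ.filter fun e => c e = i) v ≤
            (mdeg ends univ v + (2 * k - 1)) / (2 * k) +
            ((mdeg ends univ v - 1) + (2 * k - 1)) / (2 * k)) := by
  classical
  obtain ⟨f, hfor, hbal⟩ := orient_exists ends
  set g' : E → (V × Bool) × (V × Bool) := fun e => (((f e).1, false), ((f e).2, true)) with hg'
  obtain ⟨c, hc⟩ := exists_balcol (k := k) g' Prod.snd (fun e => ⟨rfl, rfl⟩) hk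
  have hwt : ∀ (S : Finset E) (v : V), mdeg ends S v = mdeg f S v := by
    intro S v
    rw [mdeg_eq_sum, mdeg_eq_sum]
    apply Finset.sum_congr rfl
    intro e _
    unfold awt
    rcases hfor e with h | h <;> rw [h] <;> ring
  have hmF : ∀ (S : Finset E) (v : V),
      mdeg g' S (v, false) = (S.filter fun e => (f e).1 = v).card := by
    intro S v
    unfold mdeg
    have h2 : (S.filter fun e => (g' e).2 = (v, false)) = ∅ := by
      apply Finset.filter_false_of_mem
      intro e _
      simp [hg']
    rw [h2, Finset.card_empty, add_zero]
    congr 1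
    apply Finset.filter_congr
    intro e _
    simp [hg']
  have hmT : ∀ (S : Finset E) (v : V),
      mdeg g' S (v, true) = (S.filter fun e => (f e).2 = v).card := by
    intro S v
    unfold mdeg
    have h2 : (S.filter fun e => (g' e).1 = (v, true)) = ∅ := by
      apply Finset.filter_false_of_mem
      intro e _
      simp [hg']
    rw [h2, Finset.card_empty, zero_add]
    congr 1
    apply Finset.filter_congr
    intro e _
    simp [hg']
  have hsplitdeg : ∀ (S : Finset E) (v : V),
      mdeg f S v = mdeg g' S (v, false) + mdeg g' S (v, true) := by
    intro S v
    rw [hmF, hmT]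
    rfl
  have hfib : ∀ w : V × Bool, ∑ j : Fin k, mdeg g' (colCl c j) w = mdeg g' univ w := by
    intro w
    simp only [mdeg_eq_sum, colCl]
    exact Finset.sum_fiberwise univ c (awt g' w)
  refine ⟨c, ?_, ?_⟩
  · -- size balance
    intro i
    have hcardsum : ∑ j : Fin k, (colCl c j).card = Fintype.card E := by
      rw [← Finset.card_univ]
      simp only [colCl]
      exact (Finset.card_eq_sum_card_fiberwise (fun e _ => Finset.mem_univ (c e))).symm
    obtain ⟨-, -, hup, hdn⟩ := fiber_bounds hk (fun j => (colCl c j).card)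
      (Fintype.card E) hcardsum (fun i' j' => (hc i' j').1) i
    have hk' : (0:ℝ) < (k:ℝ) := by exact_mod_cast hk
    show |(((colCl c i).card : ℝ)) - (Fintype.card E : ℝ) / (k : ℝ)| < 1
    have h1 : ((colCl c i).card : ℝ) * k < Fintype.card E + k := by
      have : (colCl c i).card * k < Fintype.card E + k := by
        have : k * (colCl c i).card ≤ Fintype.card E + (k-1) := hup
        have hmc : k * (colCl c i).card = (colCl c i).card * k := by ring
        omega
      exact_mod_cast this
    have h2 : (Fintype.card E : ℝ) < ((colCl c i).card + 1) * k := by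
      have : Fintype.card E < ((colCl c i).card + 1) * k := by
        have : Fintype.card E ≤ k * (colCl c i).card + (k-1) := hdn
        have hmc : ((colCl c i).card + 1) * k = k * (colCl c i).card + k := by ring
        omega
      exact_mod_cast this
    rw [abs_sub_lt_iff]
    constructor
    · rw [sub_lt_iff_lt_add]
      have step : ((colCl c i).card : ℝ) < ((Fintype.card E : ℝ) + k) / k := by
        rw [lt_div_iff₀ hk']
        linarith
      have heq : ((Fintype.card E : ℝ) + k) / k = (Fintype.card E : ℝ) / k + 1 := by
        field_simp
      linarith [step, heq.le]
    · rw [sub_lt_iff_lt_add]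
      have step : (Fintype.card E : ℝ) / k < (colCl c i).card + 1 := by
        rw [div_lt_iff₀ hk']
        linarith
      linarith
  · -- degree balance
    intro v i
    have hdab : (univ.filter fun e : E => (f e).1 = v).card +
        (univ.filter fun e : E => (f e).2 = v).card = mdeg ends univ v := by
      rw [hwt univ v]
      rfl
    obtain ⟨hba1, hba2⟩ := hbal v
    have hxa : ∑ j : Fin k, mdeg g' (colCl c j) (v, false) =
        (univ.filter fun e : E => (f e).1 = v).card := by
      rw [hfib (v, false), hmF univ v]
    have hyb : ∑ j : Fin k, mdeg g' (colCl c j) (v, true) =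
        (univ.filter fun e : E => (f e).2 = v).card := by
      rw [hfib (v, true), hmT univ v]
    obtain ⟨hxl, hxu, -, -⟩ := fiber_bounds hk (fun j => mdeg g' (colCl c j) (v, false)) _
      hxa (fun i' j' => (hc i' j').2 (v, false)) i
    obtain ⟨hyl, hyu, -, -⟩ := fiber_bounds hk (fun j => mdeg g' (colCl c j) (v, true)) _
      hyb (fun i' j' => (hc i' j').2 (v, true)) i
    have hdeg_i : mdeg ends (univ.filter fun e => c e = i) v =
        mdeg g' (colCl c i) (v, false) + mdeg g' (colCl c i) (v, true) := by
      rw [show (univ.filter fun e => c e = i) = colCl c i from rfl, hwt, hsplitdeg]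
    set d := mdeg ends univ v with hd
    set a := (univ.filter fun e : E => (f e).1 = v).card with ha'
    set b := (univ.filter fun e : E => (f e).2 = v).card with hb'
    have hcase : (a = d/2 ∧ b = (d+1)/2) ∨ (a = (d+1)/2 ∧ b = d/2) := by omega
    rw [hdeg_i]
    constructor
    · rcases hcase with ⟨hca, hcb⟩ | ⟨hca, hcb⟩
      · calc d / (2*k) + (d+1) / (2*k) = a / k + b / k := by
              rw [hca, hcb, ← Nat.div_div_eq_div_mul d 2 k, ← Nat.div_div_eq_div_mul (d+1) 2 k]
          _ ≤ mdeg g' (colCl c i) (v, false) + mdeg g' (colCl c i) (v, true) :=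
              add_le_add hxl hyl
      · calc d / (2*k) + (d+1) / (2*k) = b / k + a / k := by
              rw [hca, hcb, ← Nat.div_div_eq_div_mul d 2 k, ← Nat.div_div_eq_div_mul (d+1) 2 k,
                Nat.add_comm]
          _ = a / k + b / k := by rw [Nat.add_comm]
          _ ≤ mdeg g' (colCl c i) (v, false) + mdeg g' (colCl c i) (v, true) :=
              add_le_add hxl hyl
    · rcases hcase with ⟨hca, hcb⟩ | ⟨hca, hcb⟩
      · calc mdeg g' (colCl c i) (v, false) + mdeg g' (colCl c i) (v, true)
            ≤ (a + (k-1)) / k + (b + (k-1)) / k := add_le_add hxu hyu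
          _ = (d + (2*k-1)) / (2*k) + ((d-1) + (2*k-1)) / (2*k) := by
              rw [hca, hcb, ceilB d k hk, ceilA d k hk, Nat.add_comm]
      · calc mdeg g' (colCl c i) (v, false) + mdeg g' (colCl c i) (v, true)
            ≤ (a + (k-1)) / k + (b + (k-1)) / k := add_le_add hxu hyu
          _ = (d + (2*k-1)) / (2*k) + ((d-1) + (2*k-1)) / (2*k) := by
              rw [hca, hcb, ceilB d k hk, ceilA d k hk]
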